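/- Let n ≥ 2 and regard the symplectic group Sp_{2n}(ℂ) = {g | ᵗg·J·g = J} as a subgroup of SL_{2n}(ℂ). Then the normalizer of Sp_{2n}(ℂ) in SL_{2n}(ℂ) equals the subgroup generated by the center of SL_{2n}(ℂ) together with Sp_{2n}(ℂ). -/

import Mathlib

open Matrix

/-- The standard symplectic matrix `J = [[0, Iₙ],[-Iₙ, 0]]`. -/
def Jmat (n : ℕ) : Matrix (Fin n ⊕ Fin n) (Fin n ⊕ Fin n) ℂ :=
  Matrix.fromBlocks 0 1 (-1) 0




/-- the multilinear map `v ↦ ∏ i, ω (v (inl i)) (v (inr i))` where ω is the symplectic form -/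
noncomputable def sympF (n : ℕ) : MultilinearMap ℂ (fun _ : Fin n ⊕ Fin n => ((Fin n ⊕ Fin n) → ℂ)) ℂ where
  toFun v := ∏ i : Fin n, (v (Sum.inl i)) ⬝ᵥ (Jmat n *ᵥ v (Sum.inr i))
  map_update_add' := by
    intro dec v j x y
    rcases j with k | k
    · rw [← Finset.mul_prod_erase Finset.univ _ (Finset.mem_univ k),
        ← Finset.mul_prod_erase Finset.univ _ (Finset.mem_univ k),
        ← Finset.mul_prod_erase Finset.univ _ (Finset.mem_univ k)]
      have he : ∀ z : (Fin n ⊕ Fin n) → ℂ, ∀ i ∈ Finset.univ.erase k,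
          (Function.update v (Sum.inl k) z (Sum.inl i)) ⬝ᵥ
            (Jmat n *ᵥ Function.update v (Sum.inl k) z (Sum.inr i)) =
          (v (Sum.inl i)) ⬝ᵥ (Jmat n *ᵥ v (Sum.inr i)) := by
        intro z i hi
        rw [Function.update_of_ne (by simp [(Finset.mem_erase.1 hi).1]),
          Function.update_of_ne (by simp)]
      rw [Finset.prod_congr rfl (he (x+y)), Finset.prod_congr rfl (he x),
        Finset.prod_congr rfl (he y), Function.update_self, Function.update_self,
        Function.update_self, Function.update_of_ne (by simp), Function.update_of_ne (by simp),
        Function.update_of_ne (by simp), add_dotProduct, add_mul]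
    · rw [← Finset.mul_prod_erase Finset.univ _ (Finset.mem_univ k),
        ← Finset.mul_prod_erase Finset.univ _ (Finset.mem_univ k),
        ← Finset.mul_prod_erase Finset.univ _ (Finset.mem_univ k)]
      have he : ∀ z : (Fin n ⊕ Fin n) → ℂ, ∀ i ∈ Finset.univ.erase k,
          (Function.update v (Sum.inr k) z (Sum.inl i)) ⬝ᵥ
            (Jmat n *ᵥ Function.update v (Sum.inr k) z (Sum.inr i)) =
          (v (Sum.inl i)) ⬝ᵥ (Jmat n *ᵥ v (Sum.inr i)) := by
        intro z i hi
        rw [Function.update_of_ne (by simp),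
          Function.update_of_ne (by simp [(Finset.mem_erase.1 hi).1])]
      rw [Finset.prod_congr rfl (he (x+y)), Finset.prod_congr rfl (he x),
        Finset.prod_congr rfl (he y), Function.update_self, Function.update_self,
        Function.update_self, Function.update_of_ne (by simp), Function.update_of_ne (by simp),
        Function.update_of_ne (by simp), mulVec_add, dotProduct_add, add_mul]
  map_update_smul' := by
    intro dec v j c x
    rcases j with k | k
    · rw [← Finset.mul_prod_erase Finset.univ _ (Finset.mem_univ k),
        ← Finset.mul_prod_erase Finset.univ _ (Finset.mem_univ k)]
      have he : ∀ z : (Fin n ⊕ Fin n) → ℂ, ∀ i ∈ Finset.univ.erase k,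
          (Function.update v (Sum.inl k) z (Sum.inl i)) ⬝ᵥ
            (Jmat n *ᵥ Function.update v (Sum.inl k) z (Sum.inr i)) =
          (v (Sum.inl i)) ⬝ᵥ (Jmat n *ᵥ v (Sum.inr i)) := by
        intro z i hi
        rw [Function.update_of_ne (by simp [(Finset.mem_erase.1 hi).1]),
          Function.update_of_ne (by simp)]
      rw [Finset.prod_congr rfl (he (c • x)), Finset.prod_congr rfl (he x),
        Function.update_self, Function.update_self,
        Function.update_of_ne (by simp), Function.update_of_ne (by simp),
        smul_dotProduct, smul_eq_mul, smul_eq_mul, mul_assoc]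
    · rw [← Finset.mul_prod_erase Finset.univ _ (Finset.mem_univ k),
        ← Finset.mul_prod_erase Finset.univ _ (Finset.mem_univ k)]
      have he : ∀ z : (Fin n ⊕ Fin n) → ℂ, ∀ i ∈ Finset.univ.erase k,
          (Function.update v (Sum.inr k) z (Sum.inl i)) ⬝ᵥ
            (Jmat n *ᵥ Function.update v (Sum.inr k) z (Sum.inr i)) =
          (v (Sum.inl i)) ⬝ᵥ (Jmat n *ᵥ v (Sum.inr i)) := by
        intro z i hi
        rw [Function.update_of_ne (by simp),
          Function.update_of_ne (by simp [(Finset.mem_erase.1 hi).1])]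
      rw [Finset.prod_congr rfl (he (c • x)), Finset.prod_congr rfl (he x),
        Function.update_self, Function.update_self,
        Function.update_of_ne (by simp), Function.update_of_ne (by simp),
        mulVec_smul, dotProduct_smul, smul_eq_mul, smul_eq_mul, mul_assoc]


lemma Jmat_ll (n : ℕ) (a b : Fin n) : Jmat n (Sum.inl a) (Sum.inl b) = 0 := rfl
lemma Jmat_rr (n : ℕ) (a b : Fin n) : Jmat n (Sum.inr a) (Sum.inr b) = 0 := rfl
lemma Jmat_lr (n : ℕ) (a b : Fin n) :
    Jmat n (Sum.inl a) (Sum.inr b) = if a = b then 1 else 0 := Matrix.one_apply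
lemma Jmat_rl (n : ℕ) (a b : Fin n) :
    Jmat n (Sum.inr a) (Sum.inl b) = if a = b then -1 else 0 := by
  show (-1 : Matrix (Fin n) (Fin n) ℂ) a b = _
  by_cases h : a = b <;> simp [Matrix.one_apply, h]

/-- the permutation swapping `inl i ↔ inr i` for each `i` with `ε i = true`. -/
def tauPerm (n : ℕ) (ε : Fin n → Bool) : Equiv.Perm (Fin n ⊕ Fin n) :=
  Function.Involutive.toPerm
    (fun x => if ε (Sum.elim id id x) then x.swap else x)
    (by intro x; rcases x with i | i <;> by_cases h : ε i <;> simp [h])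

lemma tauPerm_apply_inl (n : ℕ) (ε : Fin n → Bool) (i : Fin n) :
    tauPerm n ε (Sum.inl i) = if ε i then Sum.inr i else Sum.inl i := rfl

lemma tauPerm_apply_inr (n : ℕ) (ε : Fin n → Bool) (i : Fin n) :
    tauPerm n ε (Sum.inr i) = if ε i then Sum.inl i else Sum.inr i := rfl

lemma sign_tauPerm_aux (n : ℕ) (s : Finset (Fin n)) :
    ∀ ε : Fin n → Bool, Finset.univ.filter (fun i => ε i = true) = s →
      Equiv.Perm.sign (tauPerm n ε) = (-1) ^ s.card := by
  induction s using Finset.induction_on with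
  | empty =>
    intro ε hε
    have h0 : ∀ i, ε i = false := by
      intro i
      by_contra h
      have : i ∈ Finset.univ.filter (fun i => ε i = true) := by
        simp only [Finset.mem_filter, Finset.mem_univ, true_and]
        cases hv : ε i with | false => exact absurd hv h | true => rfl
      simp [hε] at this
    have : tauPerm n ε = 1 := by
      apply Equiv.ext
      intro x
      rcases x with i | i <;> simp [tauPerm_apply_inl, tauPerm_apply_inr, h0]
    simp [this]
  | @insert a s ha ih =>
    intro ε hε
    have hεa : ε a = true := by
      have : a ∈ Finset.univ.filter (fun i => ε i = true) := by
        rw [hε]; exact Finset.mem_insert_self a s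
      simpa using this
    set ε' : Fin n → Bool := Function.update ε a false with hε'def
    have hfilter : Finset.univ.filter (fun i => ε' i = true) = s := by
      ext i
      by_cases hia : i = a
      · subst hia
        simp [hε'def, Function.update_self, ha]
      · have : (i ∈ Finset.univ.filter fun i => ε i = true) ↔ i ∈ insert a s := by rw [hε]
        simp only [Finset.mem_filter, Finset.mem_univ, true_and, Finset.mem_insert] at this
        simp [hε'def, Function.update_of_ne hia, this, hia]
    have hcomp : tauPerm n ε = Equiv.swap (Sum.inl a) (Sum.inr a) * tauPerm n ε' := by
      apply Equiv.ext
      intro x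
      rcases x with i | i <;> by_cases hia : i = a
      · subst hia
        simp [Equiv.Perm.mul_apply, tauPerm_apply_inl, hεa, hε'def, Equiv.swap_apply_left]
      · simp only [Equiv.Perm.mul_apply, tauPerm_apply_inl, hε'def, Function.update_of_ne hia]
        by_cases h : ε i <;>
          simp [h, Equiv.swap_apply_of_ne_of_ne, Sum.inl.injEq, Sum.inr.injEq, hia]
      · subst hia
        simp [Equiv.Perm.mul_apply, tauPerm_apply_inr, hεa, hε'def, Equiv.swap_apply_right]
      · simp only [Equiv.Perm.mul_apply, tauPerm_apply_inr, hε'def, Function.update_of_ne hia]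
        by_cases h : ε i <;>
          simp [h, Equiv.swap_apply_of_ne_of_ne, Sum.inl.injEq, Sum.inr.injEq, hia]
    rw [hcomp, _root_.map_mul, Equiv.Perm.sign_swap (by simp), ih ε' hfilter,
      Finset.card_insert_of_notMem ha, pow_succ]
    exact (mul_comm _ _)
lemma sign_tauPerm (n : ℕ) (ε : Fin n → Bool) :
    Equiv.Perm.sign (tauPerm n ε) =
      (-1) ^ (Finset.univ.filter (fun i => ε i = true)).card :=
  sign_tauPerm_aux n _ ε rfl
noncomputable def sympOmega (n : ℕ) := MultilinearMap.alternatization (sympF n)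

open Equiv in
lemma sympOmega_basis_ne_zero (n : ℕ) :
    sympOmega n (fun a => Pi.single a (1:ℂ)) ≠ 0 := by
  classical
  have hterm : ∀ σ : Equiv.Perm (Fin n ⊕ Fin n),
      Equiv.Perm.sign σ • (sympF n).domDomCongr σ (fun a => Pi.single a (1:ℂ)) =
      (if (∀ i : Fin n, Sum.elim id id (σ (Sum.inl i)) = Sum.elim id id (σ (Sum.inr i)))
        then (1:ℂ) else 0) := by
    intro σ
    have hFval : (sympF n).domDomCongr σ (fun a => Pi.single a (1:ℂ)) =
        ∏ i : Fin n, Jmat n (σ (Sum.inl i)) (σ (Sum.inr i)) := by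
      rw [MultilinearMap.domDomCongr_apply]
      show ∏ i : Fin n, _ = _
      refine Finset.prod_congr rfl fun i _ => ?_
      show Pi.single (σ (Sum.inl i)) (1:ℂ) ⬝ᵥ Jmat n *ᵥ Pi.single (σ (Sum.inr i)) (1:ℂ) = _
      rw [mulVec_single, single_dotProduct]
      simp
    by_cases hC : ∀ i : Fin n, Sum.elim id id (σ (Sum.inl i)) = Sum.elim id id (σ (Sum.inr i))
    · rw [if_pos hC, hFval]
      have key : ∀ i : Fin n, ∃ j : Fin n,
          (σ (Sum.inl i) = Sum.inl j ∧ σ (Sum.inr i) = Sum.inr j) ∨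
          (σ (Sum.inl i) = Sum.inr j ∧ σ (Sum.inr i) = Sum.inl j) := by
        intro i
        have hne : σ (Sum.inl i) ≠ σ (Sum.inr i) := fun h => by simpa using σ.injective h
        have hci := hC i
        rcases h1 : σ (Sum.inl i) with a | a <;> rcases h2 : σ (Sum.inr i) with b | b <;>
          rw [h1, h2] at hci hne <;>
          simp only [Sum.elim_inl, Sum.elim_inr, id_eq] at hci <;> subst hci
        · exact absurd rfl hne
        · exact ⟨a, Or.inl ⟨rfl, rfl⟩⟩
        · exact ⟨a, Or.inr ⟨rfl, rfl⟩⟩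
        · exact absurd rfl hne
      choose p hp using key
      set ε : Fin n → Bool := fun i => decide (σ (Sum.inl i) = Sum.inr (p i)) with hεdef
      have hεtrue : ∀ i, σ (Sum.inl i) = Sum.inr (p i) → ε i = true := by
        intro i h; simp [hεdef, h]
      have hεfalse : ∀ i, σ (Sum.inl i) = Sum.inl (p i) → ε i = false := by
        intro i h; simp [hεdef, h]
      have pinj : Function.Injective p := by
        intro i i' h
        rcases hp i with ⟨h1, h2⟩ | ⟨h1, h2⟩ <;> rcases hp i' with ⟨h1', h2'⟩ | ⟨h1', h2'⟩
        · have := σ.injective (h1.trans (h ▸ h1'.symm)); simpa using this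
        · have := σ.injective (h1.trans (h ▸ h2'.symm)); simp at this
        · have := σ.injective (h2.trans (h ▸ h1'.symm)); simp at this
        · have := σ.injective (h1.trans (h ▸ h1'.symm)); simpa using this
      let πe : Equiv.Perm (Fin n) := Equiv.ofBijective p (Finite.injective_iff_bijective.mp pinj)
      have hσeq : σ = Equiv.sumCongr πe πe * tauPerm n ε := by
        apply Equiv.ext
        rintro (i | i)
        · show σ (Sum.inl i) = Equiv.sumCongr πe πe (tauPerm n ε (Sum.inl i))
          rw [tauPerm_apply_inl]
          rcases hp i with ⟨h1, h2⟩ | ⟨h1, h2⟩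
          · rw [hεfalse i h1]
            simpa [πe] using h1
          · rw [hεtrue i h1]
            simpa [πe] using h1
        · show σ (Sum.inr i) = Equiv.sumCongr πe πe (tauPerm n ε (Sum.inr i))
          rw [tauPerm_apply_inr]
          rcases hp i with ⟨h1, h2⟩ | ⟨h1, h2⟩
          · rw [hεfalse i h1]
            simpa [πe] using h2
          · rw [hεtrue i h1]
            simpa [πe] using h2
      have hsign : Equiv.Perm.sign σ =
          (-1) ^ (Finset.univ.filter (fun i => ε i = true)).card := by
        rw [hσeq, _root_.map_mul, Equiv.Perm.sign_sumCongr, sign_tauPerm,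
          Int.units_mul_self, one_mul]
      have hprod : ∏ i : Fin n, Jmat n (σ (Sum.inl i)) (σ (Sum.inr i)) =
          (-1 : ℂ) ^ (Finset.univ.filter (fun i => ε i = true)).card := by
        have : ∀ i ∈ Finset.univ, Jmat n (σ (Sum.inl i)) (σ (Sum.inr i)) =
            (if ε i = true then (-1 : ℂ) else 1) := by
          intro i _
          rcases hp i with ⟨h1, h2⟩ | ⟨h1, h2⟩
          · rw [h1, h2, Jmat_lr, if_pos rfl, hεfalse i h1]
            simp
          · rw [h1, h2, Jmat_rl, if_pos rfl, hεtrue i h1]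
            simp
        rw [Finset.prod_congr rfl this, Finset.prod_ite, Finset.prod_const,
          Finset.prod_const, one_pow, mul_one]
      rw [hprod, hsign]
      simp only [Units.smul_def, Units.val_pow_eq_pow_val, Units.val_neg, Units.val_one,
        zsmul_eq_mul, Int.cast_pow, Int.cast_neg, Int.cast_one, ← mul_pow]
      norm_num
    · rw [if_neg hC, hFval]
      push_neg at hC
      obtain ⟨i, hi⟩ := hC
      have hzero : Jmat n (σ (Sum.inl i)) (σ (Sum.inr i)) = 0 := by
        rcases h1 : σ (Sum.inl i) with a | a <;> rcases h2 : σ (Sum.inr i) with b | b <;>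
          rw [h1, h2] at hi <;>
          simp only [Sum.elim_inl, Sum.elim_inr, id_eq] at hi
        · exact Jmat_ll n a b
        · rw [Jmat_lr, if_neg hi]
        · rw [Jmat_rl, if_neg hi]
        · exact Jmat_rr n a b
      rw [Finset.prod_eq_zero (Finset.mem_univ i) hzero, smul_zero]
  rw [sympOmega, MultilinearMap.alternatization_apply,
    Finset.sum_congr rfl (fun σ _ => hterm σ), Finset.sum_boole]
  have h1 : (1 : Equiv.Perm (Fin n ⊕ Fin n)) ∈ Finset.univ.filter
      (fun σ : Equiv.Perm (Fin n ⊕ Fin n) =>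
        ∀ i : Fin n, Sum.elim id id (σ (Sum.inl i)) = Sum.elim id id (σ (Sum.inr i))) := by
    simp
  exact Nat.cast_ne_zero.mpr (Finset.card_ne_zero_of_mem h1)

lemma det_of_similitude (n : ℕ) (A : Matrix (Fin n ⊕ Fin n) (Fin n ⊕ Fin n) ℂ) (c : ℂ)
    (hA : Aᵀ * Jmat n * A = c • Jmat n) : A.det = c ^ n := by
  classical
  have hform : ∀ x y : (Fin n ⊕ Fin n) → ℂ,
      (A *ᵥ x) ⬝ᵥ (Jmat n *ᵥ (A *ᵥ y)) = c * (x ⬝ᵥ (Jmat n *ᵥ y)) := by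
    intro x y
    rw [mulVec_mulVec, dotProduct_mulVec, vecMul_mulVec, ← Matrix.mul_assoc, hA,
      ← mulVec_transpose, transpose_smul, smul_mulVec, smul_dotProduct, smul_eq_mul,
      mulVec_transpose, ← dotProduct_mulVec]
  have hscale : ∀ v : (Fin n ⊕ Fin n) → ((Fin n ⊕ Fin n) → ℂ),
      sympF n (fun a => A *ᵥ v a) = c ^ n * sympF n v := by
    intro v
    show (∏ i : Fin n, _) = c ^ n * ∏ i : Fin n, _
    rw [Finset.prod_congr rfl (fun i _ => hform (v (Sum.inl i)) (v (Sum.inr i))),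
      Finset.prod_mul_distrib, Finset.prod_const, Finset.card_univ, Fintype.card_fin]
  have homega : sympOmega n (fun a => A *ᵥ Pi.single a 1) =
      c ^ n * sympOmega n (fun a => Pi.single a 1) := by
    rw [sympOmega, MultilinearMap.alternatization_apply,
      MultilinearMap.alternatization_apply, Finset.mul_sum]
    refine Finset.sum_congr rfl fun σ _ => ?_
    rw [MultilinearMap.domDomCongr_apply, MultilinearMap.domDomCongr_apply]
    rw [show (sympF n) (fun i => A *ᵥ Pi.single (σ i) (1:ℂ)) =
      c ^ n * (sympF n) (fun i => Pi.single (σ i) (1:ℂ)) from hscale _]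
    simp only [Units.smul_def, zsmul_eq_mul]
    ring
  have hdet : sympOmega n (fun a => A *ᵥ Pi.single a 1) =
      A.det * sympOmega n (fun a => Pi.single a 1) := by
    have hb := (sympOmega n).eq_smul_basis_det (Pi.basisFun ℂ (Fin n ⊕ Fin n))
    have hM : (Pi.basisFun ℂ (Fin n ⊕ Fin n)).toMatrix (fun a => A *ᵥ Pi.single a 1) = A := by
      ext i j
      rw [Module.Basis.toMatrix_apply, Pi.basisFun_repr, mulVec_single]
      simp
    have hself : sympOmega n (fun a => Pi.single a (1:ℂ)) =
        sympOmega n (Pi.basisFun ℂ (Fin n ⊕ Fin n)) := by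
      congr 1
      funext a
      rw [Pi.basisFun_apply]
    calc sympOmega n (fun a => A *ᵥ Pi.single a 1)
        = (sympOmega n (Pi.basisFun ℂ (Fin n ⊕ Fin n))) •
            (Pi.basisFun ℂ (Fin n ⊕ Fin n)).det (fun a => A *ᵥ Pi.single a 1) := by
          conv_lhs => rw [hb]
          rfl
      _ = A.det * sympOmega n (fun a => Pi.single a 1) := by
          rw [Module.Basis.det_apply, hM, hself, smul_eq_mul, mul_comm]
  have := hdet.symm.trans homega
  exact mul_right_cancel₀ (sympOmega_basis_ne_zero n) this

/-- The symplectic group `Sp₂ₙ(ℂ) = {g | ᵗg ⬝ J ⬝ g = J}`, as a subgroup of `SL₂ₙ(ℂ)`. -/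
def Sp (n : ℕ) : Subgroup (Matrix.SpecialLinearGroup (Fin n ⊕ Fin n) ℂ) where
  carrier := {g | g.valᵀ * Jmat n * g.val = Jmat n}
  one_mem' := by simp [Matrix.SpecialLinearGroup.coe_one]
  mul_mem' := by
    intro a b ha hb
    simp only [Set.mem_setOf_eq] at *
    show (a * b).valᵀ * Jmat n * (a * b).val = Jmat n
    have hab : (a * b).val = a.val * b.val := rfl
    rw [hab, Matrix.transpose_mul]
    calc b.valᵀ * a.valᵀ * Jmat n * (a.val * b.val)
        = b.valᵀ * (a.valᵀ * Jmat n * a.val) * b.val := by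
          simp only [Matrix.mul_assoc]
      _ = Jmat n := by rw [ha, hb]
  inv_mem' := by
    intro a ha
    simp only [Set.mem_setOf_eq] at *
    have h1 : a.val * (a⁻¹).val = 1 := congrArg Subtype.val (mul_inv_cancel a)
    calc (a⁻¹).valᵀ * Jmat n * (a⁻¹).val
        = (a⁻¹).valᵀ * (a.valᵀ * Jmat n * a.val) * (a⁻¹).val := by rw [ha]
      _ = (a.val * (a⁻¹).val)ᵀ * Jmat n * (a.val * (a⁻¹).val) := by
          rw [Matrix.transpose_mul]
          simp only [Matrix.mul_assoc]
      _ = Jmat n := by rw [h1]; simp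

lemma stdBasis_symm_pair {n : ℕ} (i j : Fin n) :
    (Matrix.single i j (1:ℂ) + Matrix.single j i 1)ᵀ =
      Matrix.single i j (1:ℂ) + Matrix.single j i 1 := by
  ext a b
  simp only [Matrix.transpose_apply, Matrix.add_apply, Matrix.single, Matrix.of_apply]
  by_cases h1 : i = a <;> by_cases h2 : j = b <;> by_cases h3 : i = b <;> by_cases h4 : j = a <;>
    simp [h1, h2, h3, h4, and_comm, add_comm]

lemma stdBasis_symm_diag {n : ℕ} (i : Fin n) :
    (Matrix.single i i (1:ℂ))ᵀ = Matrix.single i i 1 := by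
  ext a b
  simp only [Matrix.transpose_apply, Matrix.single, Matrix.of_apply]
  by_cases h1 : i = a <;> by_cases h2 : i = b <;> simp [h1, h2]

/-- a matrix commuting with all symmetric matrices is scalar -/
lemma eq_smul_one_of_commute_symm {n : ℕ} (Q : Matrix (Fin n) (Fin n) ℂ)
    (h : ∀ B : Matrix (Fin n) (Fin n) ℂ, Bᵀ = B → Q * B = B * Q) :
    ∃ c : ℂ, Q = c • 1 := by
  have hcomm : Pairwise fun i j : Fin n => Commute (Matrix.single i j (1:ℂ)) Q := by
    intro i j hij
    have cS : Commute (Matrix.single i j (1:ℂ) + Matrix.single j i 1) Q :=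
      (Commute.symm (h _ (stdBasis_symm_pair i j)) : _)
    have cii : Commute (Matrix.single i i (1:ℂ)) Q :=
      (Commute.symm (h _ (stdBasis_symm_diag i)) : _)
    have cjj : Commute (Matrix.single j j (1:ℂ)) Q :=
      (Commute.symm (h _ (stdBasis_symm_diag j)) : _)
    have hfact : Matrix.single i j (1:ℂ) =
        Matrix.single i i 1 *
          (Matrix.single i j 1 + Matrix.single j i 1) *
          Matrix.single j j 1 := by
      rw [mul_add, Matrix.single_mul_single_same, Matrix.single_mul_single_of_ne (h := hij),
        add_zero, Matrix.single_mul_single_same]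
      norm_num
    rw [hfact]
    exact Commute.mul_left (Commute.mul_left cii cS) cjj
  obtain ⟨c, hc⟩ := Matrix.mem_range_scalar_of_commute_single hcomm
  refine ⟨c, ?_⟩
  rw [← hc, Matrix.scalar_apply]
  ext i j
  by_cases hij : i = j <;>
    simp [Matrix.diagonal_apply, Matrix.one_apply, hij]

lemma upper_mem_Sp {n : ℕ} (B : Matrix (Fin n) (Fin n) ℂ) (hB : Bᵀ = B) :
    ∃ u : Matrix.SpecialLinearGroup (Fin n ⊕ Fin n) ℂ,
      u ∈ Sp n ∧ u.val = Matrix.fromBlocks 1 B 0 1 := by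
  have hdet : (Matrix.fromBlocks (1 : Matrix (Fin n) (Fin n) ℂ) B 0 1).det = 1 := by
    rw [Matrix.det_fromBlocks_zero₂₁]
    norm_num
  refine ⟨⟨_, hdet⟩, ?_, rfl⟩
  show (Matrix.fromBlocks 1 B 0 1)ᵀ * Jmat n * Matrix.fromBlocks 1 B 0 1 = Jmat n
  rw [Jmat, Matrix.fromBlocks_transpose, Matrix.fromBlocks_multiply, Matrix.fromBlocks_multiply]
  simp [hB]

lemma lower_mem_Sp {n : ℕ} (C : Matrix (Fin n) (Fin n) ℂ) (hC : Cᵀ = C) :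
    ∃ u : Matrix.SpecialLinearGroup (Fin n ⊕ Fin n) ℂ,
      u ∈ Sp n ∧ u.val = Matrix.fromBlocks 1 0 C 1 := by
  have hdet : (Matrix.fromBlocks (1 : Matrix (Fin n) (Fin n) ℂ) 0 C 1).det = 1 := by
    rw [Matrix.det_fromBlocks_zero₁₂]
    norm_num
  refine ⟨⟨_, hdet⟩, ?_, rfl⟩
  show (Matrix.fromBlocks 1 0 C 1)ᵀ * Jmat n * Matrix.fromBlocks 1 0 C 1 = Jmat n
  rw [Jmat, Matrix.fromBlocks_transpose, Matrix.fromBlocks_multiply, Matrix.fromBlocks_multiply]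
  simp [hC]

/-- For `n ≥ 2`, the normalizer of the symplectic group `Sp₂ₙ(ℂ)` in
`SL₂ₙ(ℂ)` equals the subgroup generated by the center of `SL₂ₙ(ℂ)` together with
`Sp₂ₙ(ℂ)`. -/
theorem normalizer_Sp_eq_center_sup_Sp (n : ℕ) (hn : 2 ≤ n) :
    Subgroup.normalizer ((Sp n : Subgroup (Matrix.SpecialLinearGroup (Fin n ⊕ Fin n) ℂ)) : Set (Matrix.SpecialLinearGroup (Fin n ⊕ Fin n) ℂ)) =
      Subgroup.center (Matrix.SpecialLinearGroup (Fin n ⊕ Fin n) ℂ) ⊔ Sp n := by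
  apply le_antisymm
  · intro g hg
    rw [Subgroup.mem_normalizer_iff] at hg
    set G := g.val with hGdef
    have hGG' : G * (g⁻¹).val = 1 := congrArg Subtype.val (mul_inv_cancel g)
    have hG'G : (g⁻¹).val * G = 1 := congrArg Subtype.val (inv_mul_cancel g)
    have hinv : ∀ s : Matrix.SpecialLinearGroup (Fin n ⊕ Fin n) ℂ, s ∈ Sp n →
        s.valᵀ * (Gᵀ * Jmat n * G) * s.val = Gᵀ * Jmat n * G := by
      intro s hs
      have hgs : (g * s * g⁻¹) ∈ Sp n := (hg s).mp hs
      have h0 : (G * s.val * (g⁻¹).val)ᵀ * Jmat n * (G * s.val * (g⁻¹).val) = Jmat n := hgs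
      have h1 := congrArg (fun X => Gᵀ * X * G) h0
      beta_reduce at h1
      have e2 : Gᵀ * ((G * s.val * (g⁻¹).val)ᵀ * Jmat n * (G * s.val * (g⁻¹).val)) * G =
          s.valᵀ * (Gᵀ * Jmat n * G) * s.val := by
        simp only [Matrix.transpose_mul, Matrix.mul_assoc]
        rw [hG'G, Matrix.mul_one]
        rw [← Matrix.mul_assoc Gᵀ ((g⁻¹).val)ᵀ, ← Matrix.transpose_mul, hG'G,
          Matrix.transpose_one, Matrix.one_mul]
      rw [e2] at h1
      exact h1
    set P := (Gᵀ * Jmat n * G).toBlocks₁₁ with hP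
    set Q := (Gᵀ * Jmat n * G).toBlocks₁₂ with hQ
    set R := (Gᵀ * Jmat n * G).toBlocks₂₁ with hR
    set S := (Gᵀ * Jmat n * G).toBlocks₂₂ with hS
    have hMblocks : Gᵀ * Jmat n * G = Matrix.fromBlocks P Q R S :=
      (Matrix.fromBlocks_toBlocks _).symm
    have hup : ∀ B : Matrix (Fin n) (Fin n) ℂ, Bᵀ = B →
        (P * B + Q = Q) ∧ ((B * P + R) * B + (B * Q + S) = S) := by
      intro B hB
      obtain ⟨u, huSp, huval⟩ := upper_mem_Sp B hB
      have h2 := hinv u huSp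
      rw [huval, hMblocks, Matrix.fromBlocks_transpose, Matrix.fromBlocks_multiply,
        Matrix.fromBlocks_multiply] at h2
      simp only [Matrix.transpose_one, Matrix.transpose_zero, hB, Matrix.one_mul,
        Matrix.mul_one, Matrix.zero_mul, Matrix.mul_zero, add_zero, zero_add,
        Matrix.fromBlocks_inj] at h2
      exact ⟨h2.2.1, h2.2.2.2⟩
    have hlow : ∀ C : Matrix (Fin n) (Fin n) ℂ, Cᵀ = C → Q + C * S = Q := by
      intro C hC
      obtain ⟨u, huSp, huval⟩ := lower_mem_Sp C hC
      have h2 := hinv u huSp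
      rw [huval, hMblocks, Matrix.fromBlocks_transpose, Matrix.fromBlocks_multiply,
        Matrix.fromBlocks_multiply] at h2
      simp only [Matrix.transpose_one, Matrix.transpose_zero, hC, Matrix.one_mul,
        Matrix.mul_one, Matrix.zero_mul, Matrix.mul_zero, add_zero, zero_add,
        Matrix.fromBlocks_inj] at h2
      exact h2.2.1
    have hS0 : S = 0 := by
      have h3 := hlow 1 Matrix.transpose_one
      rw [Matrix.one_mul] at h3
      exact (add_eq_left.mp h3)
    have hP0 : P = 0 := by
      have h3 := (hup 1 Matrix.transpose_one).1
      rw [Matrix.mul_one] at h3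
      exact add_eq_right.mp h3
    have hRQ : R = -Q := by
      have h3 := (hup 1 Matrix.transpose_one).2
      simp only [hP0, hS0, Matrix.mul_zero, Matrix.zero_mul, Matrix.mul_one,
        Matrix.one_mul, zero_add, add_zero] at h3
      exact eq_neg_of_add_eq_zero_left h3
    have hQcomm : ∀ B : Matrix (Fin n) (Fin n) ℂ, Bᵀ = B → Q * B = B * Q := by
      intro B hB
      have h3 := (hup B hB).2
      simp only [hP0, hS0, hRQ, Matrix.mul_zero, Matrix.zero_mul, Matrix.mul_one,
        Matrix.one_mul, zero_add, add_zero, Matrix.neg_mul] at h3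
      exact neg_add_eq_zero.mp h3
    obtain ⟨c, hc⟩ := eq_smul_one_of_commute_symm Q hQcomm
    have hMc : Gᵀ * Jmat n * G = c • Jmat n := by
      rw [hMblocks, hP0, hS0, hRQ, hc, Jmat, Matrix.fromBlocks_smul]
      rw [smul_zero, smul_neg]
    have hdetc : G.det = c ^ n := det_of_similitude n G c hMc
    have hcn : c ^ n = 1 := hdetc.symm.trans g.prop
    have hc0 : c ≠ 0 := by
      intro h
      rw [h, zero_pow (by omega : n ≠ 0)] at hcn
      exact zero_ne_one hcn
    obtain ⟨μ, hμ⟩ := IsAlgClosed.exists_pow_nat_eq c (n := 2) (by norm_num)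
    have hμ0 : μ ≠ 0 := by
      intro h
      rw [h] at hμ
      exact hc0 (by simpa using hμ.symm)
    have hcard : Fintype.card (Fin n ⊕ Fin n) = n + n := by
      simp [Fintype.card_sum]
    have hμnn : μ ^ (n + n) = 1 := by
      have : μ ^ (n + n) = (μ ^ 2) ^ n := by ring
      rw [this, hμ, hcn]
    have hdetz : (μ • (1 : Matrix (Fin n ⊕ Fin n) (Fin n ⊕ Fin n) ℂ)).det = 1 := by
      rw [Matrix.det_smul, Matrix.det_one, mul_one, hcard, hμnn]
    have hdetz' : (μ⁻¹ • (1 : Matrix (Fin n ⊕ Fin n) (Fin n ⊕ Fin n) ℂ)).det = 1 := by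
      rw [Matrix.det_smul, Matrix.det_one, mul_one, hcard, inv_pow, hμnn, inv_one]
    set z : Matrix.SpecialLinearGroup (Fin n ⊕ Fin n) ℂ := ⟨μ • 1, hdetz⟩ with hzdef
    set w : Matrix.SpecialLinearGroup (Fin n ⊕ Fin n) ℂ := ⟨μ⁻¹ • 1, hdetz'⟩ with hwdef
    have hzc : z ∈ Subgroup.center (Matrix.SpecialLinearGroup (Fin n ⊕ Fin n) ℂ) := by
      rw [Subgroup.mem_center_iff]
      intro b
      apply Subtype.ext
      show b.val * (μ • 1) = (μ • 1) * b.val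
      rw [mul_smul_comm, smul_mul_assoc, mul_one, one_mul]
    have hzw : z * w = 1 := by
      apply Subtype.ext
      show (μ • 1) * (μ⁻¹ • (1 : Matrix (Fin n ⊕ Fin n) (Fin n ⊕ Fin n) ℂ)) = 1
      rw [smul_mul_assoc, one_mul, smul_smul, mul_inv_cancel₀ hμ0, one_smul]
    have hzinv : (z⁻¹).val = μ⁻¹ • 1 := by
      rw [inv_eq_of_mul_eq_one_right hzw]
    have hh : z⁻¹ * g ∈ Sp n := by
      show ((z⁻¹ * g).val)ᵀ * Jmat n * (z⁻¹ * g).val = Jmat n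
      have hval : (z⁻¹ * g).val = μ⁻¹ • G := by
        show (z⁻¹).val * G = _
        rw [hzinv, smul_mul_assoc, one_mul]
      rw [hval, Matrix.transpose_smul, smul_mul_assoc, smul_mul_assoc, mul_smul_comm,
        hMc, smul_smul, smul_smul]
      have : μ⁻¹ * μ⁻¹ * c = 1 := by
        rw [← hμ]
        field_simp
      rw [this, one_smul]
    have hg_eq : g = z * (z⁻¹ * g) := (mul_inv_cancel_left z g).symm
    rw [hg_eq]
    exact Subgroup.mul_mem_sup hzc hh
  · refine sup_le ?_ Subgroup.le_normalizer
    intro z hz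
    rw [Subgroup.mem_normalizer_iff]
    intro h
    have hcomm := Subgroup.mem_center_iff.mp hz h
    have hzh : z * h * z⁻¹ = h := by rw [← hcomm, mul_inv_cancel_right]
    rw [hzh]
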